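/- Let E be an exact category and let A be a full subcategory closed under extensions whose inclusion functor i: A → E admits an exact right adjoint p such that for each object x the counit i p(x) → x is an inclusion. Then A is left special in E: for every exact sequence x ↣ y ↠ a of E with a ∈ A, the composite p(y) → y ↠ a is a projection of E between objects of A whose kernel lies in A. (Here one uses that the counit is an isomorphism on objects of A, since i is fully faithful.) -/

import Mathlib

/-!
Basic definitions: exact (∞-)categories à la Barwick (1-categorical formalization).
An exact structure on an additive category consists of two wide subcategories of
"inclusions" and "projections" subject to the axioms below.
-/

open CategoryTheory CategoryTheory.Limits

universe w v u v₂ u₂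

namespace ExactPaper

variable {E : Type u} [Category.{v} E]

/-- `ι` is a kernel of `f`. -/
def IsKernelι [Preadditive E] {k x y : E} (ι : k ⟶ x) (f : x ⟶ y) : Prop :=
  ∃ w : ι ≫ f = 0, Nonempty (IsLimit (KernelFork.ofι ι w))

/-- `π` is a cokernel of `f`. -/
def IsCokernelπ [Preadditive E] {x y c : E} (f : x ⟶ y) (π : y ⟶ c) : Prop :=
  ∃ w : f ≫ π = 0, Nonempty (IsColimit (CokernelCofork.ofπ π w))

/-- An exact structure on an additive category `E`: two wide subcategories of
inclusions (`↣`) and projections (`↠`) satisfying Barwick's axioms.  In the axiom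
`exact_square`, the square has top edge `i : x ⟶ y`, left edge `p : x ⟶ x'`,
right edge `q : y ⟶ y'` and bottom edge `j : x' ⟶ y'`. -/
structure ExactStructure (E : Type u) [Category.{v} E] [Preadditive E] where
  /-- the class of inclusions -/
  IsIncl : ∀ ⦃x y : E⦄, (x ⟶ y) → Prop
  /-- the class of projections -/
  IsProj : ∀ ⦃x y : E⦄, (x ⟶ y) → Prop
  incl_id : ∀ x : E, IsIncl (𝟙 x)
  incl_comp : ∀ {x y z : E} (f : x ⟶ y) (g : y ⟶ z), IsIncl f → IsIncl g → IsIncl (f ≫ g)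
  proj_id : ∀ x : E, IsProj (𝟙 x)
  proj_comp : ∀ {x y z : E} (f : x ⟶ y) (g : y ⟶ z), IsProj f → IsProj g → IsProj (f ≫ g)
  incl_from_zero : ∀ {z x : E}, IsZero z → ∀ f : z ⟶ x, IsIncl f
  proj_to_zero : ∀ {x z : E}, IsZero z → ∀ f : x ⟶ z, IsProj f
  /-- pushouts of inclusions along arbitrary morphisms exist -/
  pushout_incl : ∀ {x y x' : E} (i : x ⟶ y) (f : x ⟶ x'), IsIncl i →
    ∃ (y' : E) (g : y ⟶ y') (j : x' ⟶ y'), IsPushout i f g j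
  /-- inclusions are stable under pushout -/
  incl_pushout_stable : ∀ {x y x' y' : E} {i : x ⟶ y} {f : x ⟶ x'} {g : y ⟶ y'} {j : x' ⟶ y'},
    IsPushout i f g j → IsIncl i → IsIncl j
  /-- pullbacks of projections along arbitrary morphisms exist -/
  pullback_proj : ∀ {y z z' : E} (p : y ⟶ z) (f : z' ⟶ z), IsProj p →
    ∃ (y' : E) (g : y' ⟶ y) (q : y' ⟶ z'), IsPullback g q p f
  /-- projections are stable under pullback -/
  proj_pullback_stable : ∀ {y' z' y z : E} {g : y' ⟶ y} {q : y' ⟶ z'} {p : y ⟶ z} {f : z' ⟶ z},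
    IsPullback g q p f → IsProj p → IsProj q
  /-- compatibility: the pushout and pullback descriptions of exact squares agree -/
  exact_square : ∀ {x y x' y' : E} (i : x ⟶ y) (p : x ⟶ x') (q : y ⟶ y') (j : x' ⟶ y'),
    i ≫ q = p ≫ j →
    ((IsIncl i ∧ IsProj p ∧ IsPushout i p q j) ↔ (IsIncl j ∧ IsProj q ∧ IsPullback i p q j))

/-- An exact sequence `x ↣ y ↠ z`: an inclusion which is a kernel of a projection
which is in turn a cokernel of the inclusion. -/
def IsExactSeq [Preadditive E] (S : ExactStructure E) {x y z : E} (i : x ⟶ y) (p : y ⟶ z) :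
    Prop :=
  S.IsIncl i ∧ S.IsProj p ∧ IsKernelι i p ∧ IsCokernelπ i p

end ExactPaper

namespace ExactPaper

/-- Isomorphisms are projections. -/
lemma iso_isProj {E : Type u} [Category.{v} E] [Preadditive E] (S : ExactStructure E)
    {y z : E} (e : y ⟶ z) [IsIso e] : S.IsProj e :=
  S.proj_pullback_stable
    (IsPullback.of_horiz_isIso ⟨by simp⟩ : IsPullback e e (𝟙 z) (𝟙 z)) (S.proj_id z)

/-- A kernel of `f` is a kernel of `f ≫ e` for `e` an isomorphism. -/
lemma isKernelι_comp_iso {E : Type u} [Category.{v} E] [Preadditive E]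
    {k x y z : E} {κ : k ⟶ x} {f : x ⟶ y} (e : y ⟶ z) [IsIso e]
    (h : IsKernelι κ f) : IsKernelι κ (f ≫ e) := by
  obtain ⟨w, ⟨hl⟩⟩ := h
  refine ⟨by rw [← Category.assoc, w, zero_comp], ⟨?_⟩⟩
  have key : ∀ {W : E} (g : W ⟶ x), g ≫ (f ≫ e) = 0 → g ≫ f = 0 := by
    intro W g hg
    have : (g ≫ f) ≫ e = 0 ≫ e := by rw [Category.assoc, hg, zero_comp]
    exact (cancel_mono e).1 this
  exact KernelFork.IsLimit.ofι _ _
    (fun g hg => (KernelFork.IsLimit.lift' hl g (key g hg)).1)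
    (fun g hg => (KernelFork.IsLimit.lift' hl g (key g hg)).2)
    (fun g hg m hm => Fork.IsLimit.hom_ext hl (by
      simp only [Fork.ι_ofι]
      rw [hm]
      exact ((KernelFork.IsLimit.lift' hl g (key g hg)).2).symm))

/-- Let `E` be an exact category and `A` an extension-closed full
subcategory whose inclusion admits an exact right adjoint `p` whose counit
`ip(x) ⟶ x` is an inclusion for each `x`.  Then `A` is left special in `E`: for every
exact sequence `x ↣ y ↠ a` with `a ∈ A`, the composite `p(y) ⟶ y ↠ a` is a projection
of `E` between objects of `A` whose kernel lies in `A`. -/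
theorem right_adjoint_left_special {E : Type u} [Category.{v} E] [Preadditive E]
    (S : ExactStructure E) (A : E → Prop)
    (hA₀ : ∃ z : E, IsZero z ∧ A z)
    (hAext : ∀ {u y w : E} (i : u ⟶ y) (π : y ⟶ w), IsExactSeq S i π → A u → A w → A y)
    (p : E ⥤ ObjectProperty.FullSubcategory A) (adjA : ObjectProperty.ι A ⊣ p)
    (hp_zero : ∀ x : E, IsZero x → IsZero ((p ⋙ ObjectProperty.ι A).obj x))
    (hp_exact : ∀ {x y z : E} (i : x ⟶ y) (π : y ⟶ z), IsExactSeq S i π →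
      IsExactSeq S ((p ⋙ ObjectProperty.ι A).map i)
        ((p ⋙ ObjectProperty.ι A).map π))
    (hcounit : ∀ x : E, S.IsIncl (adjA.counit.app x)) :
    ∀ {x y a : E} (i : x ⟶ y) (π : y ⟶ a), IsExactSeq S i π → A a →
      S.IsProj (adjA.counit.app y ≫ π) ∧
      ∃ (k : E) (κ : k ⟶ (ObjectProperty.ι A).obj (p.obj y)),
        A k ∧ IsKernelι κ (adjA.counit.app y ≫ π) := by
  intro x y a i π hex ha
  -- the counit at an object of `A` is an isomorphism
  have tri : (ObjectProperty.ι A).map (adjA.unit.app ⟨a, ha⟩) ≫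
      adjA.counit.app a = 𝟙 a := adjA.left_triangle_components (⟨a, ha⟩ : ObjectProperty.FullSubcategory A)
  have hiso : IsIso (adjA.counit.app a) := by
    have h1 : IsIso ((ObjectProperty.ι A).map (adjA.unit.app ⟨a, ha⟩)) :=
      inferInstance
    have h2 : IsIso ((ObjectProperty.ι A).map (adjA.unit.app ⟨a, ha⟩) ≫
        adjA.counit.app a) := by rw [tri]; exact IsIso.id a
    exact IsIso.of_isIso_comp_left
      ((ObjectProperty.ι A).map (adjA.unit.app ⟨a, ha⟩)) (adjA.counit.app a)
  -- naturality of the counit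
  have hnat : adjA.counit.app y ≫ π =
      (p ⋙ ObjectProperty.ι A).map π ≫ adjA.counit.app a :=
    (adjA.counit.naturality π).symm
  obtain ⟨hinc, hproj, hker, hcoker⟩ := hp_exact i π hex
  constructor
  · rw [hnat]
    exact S.proj_comp _ _ hproj (iso_isProj S _)
  · refine ⟨(p ⋙ ObjectProperty.ι A).obj x,
      (p ⋙ ObjectProperty.ι A).map i, (p.obj x).2, ?_⟩
    rw [hnat]
    exact isKernelι_comp_iso _ hker

end ExactPaper
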